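/- For the d-dimensional tandem walk with λ < μ_i for all i and pairwise distinct μ_i, and for each nonempty a ⊂ {1,...,d} with max a = d, define β*_a = ρ_d = λ/μ_d and α*_a(l) = 1 for l ≤ a(1), α*_a(l) = ρ_{a(j)} for a(j) < l ≤ a(j+1), α*_a(l) = ρ_{a(|a|)} for l > a(|a|). Then each point (β*_a, α*_a) lies on the characteristic surface H, i.e., λ/β*_a + μ_1 α*_a(2) + Σ_{j=2}^{d} μ_j α*_a(j+1)/α*_a(j) = 1 (with α*_a(d+1) := β*_a). -/

import Mathlib

open Finset

noncomputable section

/-- `α*_a(l) = ρ_{max{i ∈ a : i < l}}`, equal to `1` when no element of `a`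
lies below `l`.  This encodes: `α*_a(l) = 1` for `l ≤ a(1)`,
`α*_a(l) = ρ_{a(j)}` for `a(j) < l ≤ a(j+1)` and `α*_a(l) = ρ_{a(|a|)}` for
`l > a(|a|)`. -/
def alphaStar (a : Finset ℕ) (ρ : ℕ → ℝ) (l : ℕ) : ℝ :=
  if h : (a.filter (fun i => i < l)).Nonempty
  then ρ ((a.filter (fun i => i < l)).max' h) else 1

/-- For the stable `d`-dimensional tandem walk with pairwise distinct service
rates, each point `(β*_a, α*_a)`, `a ⊆ {1,…,d}` with `d ∈ a`, lies on the
characteristic surface `H`: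
`λ/β* + μ₁ α*(2) + Σ_{j=2}^d μ_j α*(j+1)/α*(j) = 1` (with `α*(d+1) = β* = ρ_d`). -/
theorem tandem_alphaStar_mem_charSurface
    (d : ℕ) (hd : 1 ≤ d) (lam : ℝ) (μ : ℕ → ℝ)
    (hlam : 0 < lam) (hstab : ∀ i ∈ Finset.Icc 1 d, lam < μ i)
    (hdist : ∀ i ∈ Finset.Icc 1 d, ∀ j ∈ Finset.Icc 1 d, i ≠ j → μ i ≠ μ j)
    (hsum : lam + ∑ i ∈ Finset.Icc 1 d, μ i = 1)
    (a : Finset ℕ) (ha : a ⊆ Finset.Icc 1 d) (hda : d ∈ a)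
    (ρ : ℕ → ℝ) (hρ : ∀ i, ρ i = lam / μ i) :
    lam / ρ d + μ 1 * alphaStar a ρ 2 +
      ∑ j ∈ Finset.Icc 2 d, μ j * (alphaStar a ρ (j + 1) / alphaStar a ρ j) = 1 := by
  have hμpos : ∀ i ∈ Finset.Icc 1 d, 0 < μ i := fun i hi => hlam.trans (hstab i hi)
  have hρpos : ∀ i ∈ Finset.Icc 1 d, 0 < ρ i := by
    intro i hi
    rw [hρ]
    exact div_pos hlam (hμpos i hi)
  have hαpos : ∀ l, 0 < alphaStar a ρ l := by
    intro l
    unfold alphaStar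
    split
    · next h =>
      exact hρpos _ (ha (Finset.mem_filter.mp ((a.filter _).max'_mem h)).1)
    · norm_num
  have hα1 : alphaStar a ρ 1 = 1 := by
    unfold alphaStar
    rw [dif_neg]
    rw [Finset.not_nonempty_iff_eq_empty, Finset.filter_eq_empty_iff]
    intro i hi
    have := (Finset.mem_Icc.mp (ha hi)).1
    omega
  have hαd : alphaStar a ρ (d + 1) = ρ d := by
    have hfe : a.filter (fun i => i < d + 1) = a := by
      apply Finset.filter_true_of_mem
      intro i hi
      have := (Finset.mem_Icc.mp (ha hi)).2
      omega
    unfold alphaStar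
    rw [dif_pos (by rw [hfe]; exact ⟨d, hda⟩)]
    congr 1
    apply le_antisymm
    · apply Finset.max'_le
      intro y hy
      rw [hfe] at hy
      exact (Finset.mem_Icc.mp (ha hy)).2
    · apply Finset.le_max'
      rw [hfe]; exact hda
  have key : ∀ j ∈ Finset.Icc 1 d,
      μ j * (alphaStar a ρ (j + 1) / alphaStar a ρ j)
        = μ j + (lam / alphaStar a ρ j - lam / alphaStar a ρ (j + 1)) := by
    intro j hj
    by_cases hja : j ∈ a
    · have hαj1 : alphaStar a ρ (j + 1) = ρ j := by
        have hne : (a.filter (fun i => i < j + 1)).Nonempty :=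
          ⟨j, Finset.mem_filter.mpr ⟨hja, by omega⟩⟩
        unfold alphaStar
        rw [dif_pos hne]
        congr 1
        apply le_antisymm
        · apply Finset.max'_le
          intro y hy
          have := (Finset.mem_filter.mp hy).2
          omega
        · exact Finset.le_max' _ _ (Finset.mem_filter.mpr ⟨hja, by omega⟩)
      rw [hαj1, hρ j]
      have hμj : μ j ≠ 0 := ne_of_gt (hμpos j hj)
      have hαj : alphaStar a ρ j ≠ 0 := ne_of_gt (hαpos j)
      field_simp
      ring
    · have hαj1 : alphaStar a ρ (j + 1) = alphaStar a ρ j := by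
        have hfe : a.filter (fun i => i < j + 1) = a.filter (fun i => i < j) := by
          apply Finset.filter_congr
          intro i hi
          constructor
          · intro h
            rcases Nat.lt_succ_iff_lt_or_eq.mp h with h' | h'
            · exact h'
            · exact absurd (h' ▸ hi) hja
          · omega
        unfold alphaStar
        rw [hfe]
      rw [hαj1]
      have hαj : alphaStar a ρ j ≠ 0 := ne_of_gt (hαpos j)
      field_simp
      ring
  -- rewrite the whole LHS as a sum over Icc 1 d
  have hsplit : Finset.Icc 1 d = insert 1 (Finset.Icc 2 d) := by
    ext x
    simp only [Finset.mem_Icc, Finset.mem_insert]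
    omega
  have h1mem : 1 ∉ Finset.Icc 2 d := by simp
  have hmain : lam / ρ d + μ 1 * alphaStar a ρ 2 +
      ∑ j ∈ Finset.Icc 2 d, μ j * (alphaStar a ρ (j + 1) / alphaStar a ρ j)
      = lam / ρ d + ∑ j ∈ Finset.Icc 1 d,
          μ j * (alphaStar a ρ (j + 1) / alphaStar a ρ j) := by
    rw [hsplit, Finset.sum_insert h1mem]
    have : μ 1 * (alphaStar a ρ (1 + 1) / alphaStar a ρ 1)
        = μ 1 * alphaStar a ρ 2 := by
      rw [hα1]
      norm_num
    rw [this]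
    ring
  rw [hmain, Finset.sum_congr rfl key, Finset.sum_add_distrib]
  have htel : ∀ n : ℕ, ∑ j ∈ Finset.Icc 1 n,
      (lam / alphaStar a ρ j - lam / alphaStar a ρ (j + 1))
      = lam / alphaStar a ρ 1 - lam / alphaStar a ρ (n + 1) := by
    intro n
    induction n with
    | zero => simp
    | succ n ih =>
      rw [Finset.sum_Icc_succ_top (by omega), ih]
      ring
  rw [htel d, hα1, hαd, hρ d]
  have hμd : μ d ≠ 0 := ne_of_gt (hμpos d (Finset.mem_Icc.mpr ⟨hd, le_refl d⟩))
  have : lam / (lam / μ d) = μ d := by field_simp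
  rw [this]
  have : lam / (1 : ℝ) = lam := by norm_num
  rw [this]
  linarith [hsum]

end
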